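/- Let H be a complex Hilbert space, K(H) the C*-algebra of compact operators on H, W a Hilbert C*-module over K(H), and G a complex normed space. If S : W × W → G is a continuous sesquilinear orthogonality preserving mapping, then there exists a unique linear mapping Φ : ⟨W,W⟩ → G, defined on the linear span ⟨W,W⟩ of all inner products ⟨x,y⟩ with x, y ∈ W, such that S(x, y) = Φ(⟨y, x⟩) for all x, y ∈ W. -/

import Mathlib

open Metric ContinuousLinearMap in
/-- **Schauder's theorem** for Hilbert space: the adjoint of a compact operator is compact. -/
theorem IsCompactOperator.star_clm {H : Type*} [NormedAddCommGroup H] [InnerProductSpace ℂ H]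
    [CompleteSpace H] {f : H →L[ℂ] H} (hf : IsCompactOperator f) :
    IsCompactOperator ⇑(star f) := by
  have hA : IsCompactOperator ⇑(f ∘L (star f)) := by
    convert hf.comp_clm (star f) using 1 <;> first | rfl | simp
  have goal_iff := isCompactOperator_iff_isCompact_closure_image_closedBall
    ((star f : H →L[ℂ] H) : H →ₗ[ℂ] H) zero_lt_one
  refine goal_iff.mpr (TotallyBounded.isCompact_of_isClosed ?_ isClosed_closure)
  refine TotallyBounded.closure ?_
  rw [Metric.totallyBounded_iff]
  intro ε hε
  set A := f ∘L (star f) with hAdef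
  have hAtb : TotallyBounded (⇑A '' closedBall 0 1) := by
    have h1 := (isCompactOperator_iff_isCompact_closure_image_closedBall
      ((A : H →L[ℂ] H) : H →ₗ[ℂ] H) zero_lt_one).mp hA
    exact h1.totallyBounded.subset subset_closure
  obtain ⟨t, htsub, htfin, hcov⟩ := totallyBounded_iff_subset.mp hAtb
      {p : H × H | dist p.1 p.2 < ε ^ 2 / 8} (Metric.dist_mem_uniformity (by positivity))
  -- choose preimages of the centers
  have hchoice : ∀ y ∈ t, ∃ u ∈ closedBall (0 : H) 1, A u = y := fun y hy => by
    obtain ⟨u, hu, hu'⟩ := htsub hy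
    exact ⟨u, hu, hu'⟩
  classical
  choose u hu hAu using hchoice
  refine ⟨(fun y => if hy : y ∈ t then star f (u y hy) else 0) '' t, htfin.image _, ?_⟩
  rintro w ⟨x, hx, rfl⟩
  obtain ⟨y, hy, hdy⟩ : ∃ y ∈ t, dist (A x) y < ε ^ 2 / 8 := by
    have := hcov ⟨x, hx, rfl⟩
    simp only [Set.mem_iUnion, Set.mem_setOf_eq] at this
    obtain ⟨y, hy, hd⟩ := this
    exact ⟨y, hy, hd⟩
  simp only [Set.mem_iUnion, mem_ball]
  refine ⟨star f (u y hy), ⟨y, hy, by simp [hy]⟩, ?_⟩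
  -- estimate
  set z := x - u y hy with hz
  have hznorm : ‖z‖ ≤ 2 := by
    have h1 : ‖x‖ ≤ 1 := by simpa using hx
    have h2 : ‖u y hy‖ ≤ 1 := by simpa using hu y hy
    calc ‖z‖ ≤ ‖x‖ + ‖u y hy‖ := norm_sub_le _ _
    _ ≤ 2 := by linarith
  have hAz : ‖A z‖ < ε ^ 2 / 8 := by
    have : A z = A x - y := by rw [hz, map_sub, hAu y hy]
    rw [this, ← dist_eq_norm]
    exact hdy
  have hkey : ‖star f z‖ ^ 2 ≤ ‖z‖ * ‖A z‖ := by
    have h1 : ‖star f z‖ ^ 2 = RCLike.re (inner ℂ (star f z) (star f z)) := by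
      rw [← @norm_sq_eq_re_inner ℂ]
    have h2 : inner ℂ (star f z) (star f z) = inner ℂ z (A z) := by
      rw [star_eq_adjoint]
      rw [adjoint_inner_left]
      rfl
    have h3 : RCLike.re (inner ℂ z (A z)) ≤ ‖inner ℂ z (A z)‖ := RCLike.re_le_norm _
    have h4 : ‖inner ℂ z (A z)‖ ≤ ‖z‖ * ‖A z‖ := norm_inner_le_norm _ _
    rw [h1, h2]
    exact h3.trans h4
  have hfz : ‖star f z‖ ^ 2 < ε ^ 2 / 4 := by
    have hAz0 : 0 ≤ ‖A z‖ := norm_nonneg _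
    nlinarith [hkey, hznorm, hAz, norm_nonneg z]
  have : dist (star f x) (star f (u y hy)) = ‖star f z‖ := by
    rw [dist_eq_norm, ← map_sub, hz]
  show dist ((star f) x) ((star f) (u y hy)) < ε
  rw [this]
  nlinarith [norm_nonneg ((star f) z), hfz, hε]

noncomputable section

variable (H : Type*) [NormedAddCommGroup H] [InnerProductSpace ℂ H] [CompleteSpace H]

/-- The compact operators on the Hilbert space `H`, as a non-unital star subalgebra
of `H →L[ℂ] H`. -/
def compactStarAlgebra : NonUnitalStarSubalgebra ℂ (H →L[ℂ] H) where
  carrier := {T : H →L[ℂ] H | IsCompactOperator T}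
  add_mem' hf hg := hf.add hg
  zero_mem' := isCompactOperator_zero
  smul_mem' c _ hf := hf.smul c
  mul_mem' {f g} hf _ := by simpa [Function.comp_def] using hf.comp_clm g
  star_mem' {f} hf := hf.star_clm

/-- `K(H)`, the C*-algebra of compact operators on the Hilbert space `H`. -/
abbrev KH := ↥(compactStarAlgebra H)

instance : CStarRing (KH H) where
  norm_mul_self_le x := by simpa using CStarRing.norm_mul_self_le (x : H →L[ℂ] H)

instance : CompleteSpace (KH H) :=
  (isClosed_setOf_isCompactOperator (σ₁₂ := RingHom.id ℂ) (M₁ := H) (M₂ := H)).completeSpace_coe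

variable {H}

/-- The rank one operator `ξ ⊗ η : ν ↦ (ν, η)ξ` (inner product linear in the first slot,
i.e. `(ν, η) = ⟪η, ν⟫` in Mathlib's convention). -/
def rankOneOp (ξ η : H) : H →L[ℂ] H := (innerSL ℂ η).smulRight ξ

set_option linter.unusedSectionVars false in
theorem isCompactOperator_rankOneOp (ξ η : H) : IsCompactOperator ⇑(rankOneOp ξ η) := by
  refine (isCompactOperator_iff_image_closedBall_subset_compact
    ((rankOneOp ξ η : H →L[ℂ] H) : H →ₗ[ℂ] H) zero_lt_one).mpr ?_
  refine ⟨(fun c : ℂ => c • ξ) '' Metric.closedBall 0 ‖η‖,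
    (isCompact_closedBall 0 ‖η‖).image (by fun_prop), ?_⟩
  rintro x ⟨ν, hν, rfl⟩
  refine ⟨inner ℂ η ν, ?_, rfl⟩
  simp only [Metric.mem_closedBall, dist_zero_right] at hν ⊢
  calc ‖inner ℂ η ν‖ ≤ ‖η‖ * ‖ν‖ := norm_inner_le_norm η ν
  _ ≤ ‖η‖ := by nlinarith [norm_nonneg (η : H)]

/-- The rank one operator `ξ ⊗ η` as an element of `K(H)`. -/
def KH.rankOne (ξ η : H) : KH H := ⟨rankOneOp ξ η, isCompactOperator_rankOneOp ξ η⟩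

/-- A Hilbert C*-module structure on `W` over a C*-algebra `A`: a right `A`-action `smul`
and an `A`-valued inner product `inner` satisfying the usual axioms, whose induced norm
`‖⟨x,x⟩‖ ^ (1/2)` coincides with the (complete) norm of `W`.  Positivity `⟨x,x⟩ ≥ 0` is
encoded through its C*-algebraic characterization `∃ b, ⟨x,x⟩ = b* ⬝ b`. -/
structure HilbertModule (A : Type*) (W : Type*)
    [NonUnitalNormedRing A] [StarRing A] [CStarRing A] [NormedSpace ℂ A]
    [IsScalarTower ℂ A A] [SMulCommClass ℂ A A] [StarModule ℂ A] [CompleteSpace A]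
    [NormedAddCommGroup W] [NormedSpace ℂ W] [CompleteSpace W] : Type _ where
  smul : W → A → W
  inner : W → W → A
  add_smul' : ∀ x y a, smul (x + y) a = smul x a + smul y a
  smul_add' : ∀ x a b, smul x (a + b) = smul x a + smul x b
  smul_assoc' : ∀ x a b, smul (smul x a) b = smul x (a * b)
  smul_complex₁ : ∀ (c : ℂ) x a, smul (c • x) a = c • smul x a
  smul_complex₂ : ∀ (c : ℂ) x a, smul x (c • a) = c • smul x a
  inner_add_left : ∀ x y z, inner (x + y) z = inner x z + inner y z
  inner_add_right : ∀ x y z, inner x (y + z) = inner x y + inner x z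
  inner_smul_right : ∀ x y a, inner x (smul y a) = inner x y * a
  inner_smul_complex : ∀ (c : ℂ) x y, inner x (c • y) = c • inner x y
  star_inner : ∀ x y, star (inner x y) = inner y x
  inner_self_nonneg : ∀ x, ∃ a, inner x x = star a * a
  inner_self_eq_zero : ∀ x, inner x x = 0 ↔ x = 0
  norm_sq_eq : ∀ x, ‖x‖ ^ 2 = ‖inner x x‖

/-- A minimal projection in an algebra `A`: a nonzero self-adjoint idempotent `e`
with `e ⬝ A ⬝ e = ℂ ⬝ e`. -/
def IsMinimalProjection {A : Type*} [NonUnitalNormedRing A] [StarRing A] [NormedSpace ℂ A]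
    (e : A) : Prop :=
  star e = e ∧ e * e = e ∧ e ≠ 0 ∧ ∀ a : A, ∃ c : ℂ, e * a * e = c • e

/-- An orthonormal basis `{w i}` of a Hilbert C*-module: each `⟨wᵢ, wᵢ⟩` is a minimal
projection, `⟨wᵢ, wⱼ⟩ = 0` for `i ≠ j`, and the submodule generated by the `wᵢ`
is dense in `W`. -/
def HilbertModule.IsOrthonormalBasis {A W : Type*}
    [NonUnitalNormedRing A] [StarRing A] [CStarRing A] [NormedSpace ℂ A]
    [IsScalarTower ℂ A A] [SMulCommClass ℂ A A] [StarModule ℂ A] [CompleteSpace A]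
    [NormedAddCommGroup W] [NormedSpace ℂ W] [CompleteSpace W]
    (M : HilbertModule A W) {ι : Type*} (w : ι → W) : Prop :=
  (∀ i, IsMinimalProjection (M.inner (w i) (w i))) ∧
  (∀ i j, i ≠ j → M.inner (w i) (w j) = 0) ∧
  closure (↑(Submodule.span ℂ
      (Set.range w ∪ {x | ∃ (i : ι) (a : A), M.smul (w i) a = x})) : Set W) = Set.univ



section AuxOPR

local notation "⟪" x ", " y "⟫" => @inner ℂ _ _ x y


theorem sesq_rep_aux {E : Type*} [AddCommGroup E] [Module ℂ E]
    {G : Type*} [AddCommGroup G] [Module ℂ G]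
    (B : E → E → ℂ) (S : E → E → G)
    (hBadd : ∀ a b c, B a (b + c) = B a b + B a c)
    (hBsmul : ∀ (μ : ℂ) a b, B a (μ • b) = μ * B a b)
    (hBherm : ∀ a b, B b a = starRingEnd ℂ (B a b))
    (hBpos : ∀ a, ∃ r : ℝ, 0 ≤ r ∧ B a a = (r : ℂ))
    (hSadd₂ : ∀ a b c, S a (b + c) = S a b + S a c)
    (hSsmul₂ : ∀ (μ : ℂ) a b, S a (μ • b) = starRingEnd ℂ μ • S a b)
    (hSadd₁ : ∀ a b c, S (a + b) c = S a c + S b c)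
    (hSsmul₁ : ∀ (μ : ℂ) a b, S (μ • a) b = μ • S a b)
    (hOP : ∀ a b, B a b = 0 → S a b = 0) :
    ∃ g : G, ∀ a b, S a b = starRingEnd ℂ (B a b) • g := by
  have hBreal : ∀ a, starRingEnd ℂ (B a a) = B a a := by
    intro a; obtain ⟨r, _, hr⟩ := hBpos a; rw [hr, Complex.conj_ofReal]
  have hBadd₁ : ∀ a b c, B (a + b) c = B a c + B b c := by
    intro a b c; rw [hBherm, hBadd, map_add, ← hBherm, ← hBherm]
  have hBsmul₁ : ∀ (μ : ℂ) a b, B (μ • a) b = starRingEnd ℂ μ * B a b := by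
    intro μ a b; rw [hBherm, hBsmul, map_mul, ← hBherm]
  have hexp : ∀ (c : ℂ) a b, B (a + c • b) (a + c • b)
      = B a a + c * B a b + starRingEnd ℂ c * B b a + (c * starRingEnd ℂ c) * B b b := by
    intro c a b
    rw [hBadd, hBadd₁, hBadd₁, hBsmul, hBsmul, hBsmul₁, hBsmul₁]
    ring
  have hdeg : ∀ a, B a a = 0 → ∀ b, B a b = 0 := by
    intro a ha b
    set t : ℂ := B a b with ht
    by_cases hb : B b b = 0
    · have h3 := hexp (-(starRingEnd ℂ t)) a b
      obtain ⟨r', hr0', hr'⟩ := hBpos (a + (-(starRingEnd ℂ t)) • b)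
      rw [ha, hb, hBherm a b, hr', ← ht] at h3
      have h4 : (r' : ℂ) = -2 * (Complex.normSq t : ℂ) := by
        rw [h3]
        simp only [map_neg, Complex.conj_conj, Complex.mul_conj, Complex.normSq_eq_conj_mul_self]
        ring
      have h5 : r' = -2 * Complex.normSq t := by exact_mod_cast h4
      have h6 : Complex.normSq t ≤ 0 := by nlinarith
      exact Complex.normSq_eq_zero.mp (le_antisymm h6 (Complex.normSq_nonneg _))
    · obtain ⟨rb, hrb0, hrb⟩ := hBpos b
      have hrbne : rb ≠ 0 := by
        intro h; apply hb; rw [hrb, h]; norm_num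
      have hrbpos : 0 < rb := lt_of_le_of_ne hrb0 (Ne.symm hrbne)
      set c : ℂ := -(starRingEnd ℂ t) / rb with hc
      have hcc : starRingEnd ℂ c = -t / rb := by
        rw [hc, map_div₀, map_neg, Complex.conj_conj, Complex.conj_ofReal]
      have h := hexp c a b
      obtain ⟨r, hr0, hr⟩ := hBpos (a + c • b)
      rw [ha, hr, hrb, hBherm a b, ← ht] at h
      have h2 : (r : ℂ) * rb = -(Complex.normSq t : ℂ) := by
        rw [h, hcc, hc]
        have : (rb : ℂ) ≠ 0 := by exact_mod_cast hrbne
        field_simp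
        simp only [Complex.mul_conj, Complex.normSq_eq_conj_mul_self]
        ring
      have h5 : r * rb = -(Complex.normSq t) := by exact_mod_cast h2
      have h6 : Complex.normSq t ≤ 0 := by nlinarith
      exact Complex.normSq_eq_zero.mp (le_antisymm h6 (Complex.normSq_nonneg _))
  classical
  set gf : E → G := fun a => (B a a)⁻¹ • S a a with hgf
  have claim1 : ∀ a b, B a a ≠ 0 → S a b = starRingEnd ℂ (B a b) • gf a := by
    intro a b ha
    set μ : ℂ := B a b / B a a with hμ
    have hw : B a (b + (-μ) • a) = 0 := by
      rw [hBadd, hBsmul, hμ]; field_simp; ring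
    have hSw : S a (b + (-μ) • a) = 0 := hOP _ _ hw
    have hb : b = (b + (-μ) • a) + μ • a := by
      rw [add_assoc, ← add_smul]; simp
    have hS : S a b = starRingEnd ℂ μ • S a a := by
      conv_lhs => rw [hb]
      rw [hSadd₂, hSsmul₂, hSw, zero_add]
    rw [hS, hgf, smul_smul]
    congr 1
    rw [hμ, map_div₀, hBreal, div_eq_mul_inv]
  have claim1' : ∀ a b, B b b ≠ 0 → S a b = starRingEnd ℂ (B a b) • gf b := by
    intro a b hb
    set ν : ℂ := B b a / B b b with hν
    have hw : B b (a + (-ν) • b) = 0 := by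
      rw [hBadd, hBsmul, hν]; field_simp; ring
    have hw' : B (a + (-ν) • b) b = 0 := by rw [hBherm, hw, map_zero]
    have hSw : S (a + (-ν) • b) b = 0 := hOP _ _ hw'
    have ha : a = (a + (-ν) • b) + ν • b := by
      rw [add_assoc, ← add_smul]; simp
    have hS : S a b = ν • S b b := by
      conv_lhs => rw [ha]
      rw [hSadd₁, hSsmul₁, hSw, zero_add]
    rw [hS, hgf, smul_smul]
    congr 1
    rw [hν, hBherm a b, div_eq_mul_inv]
  have hpair : ∀ a b, B a a ≠ 0 → B b b ≠ 0 → B a b ≠ 0 → gf a = gf b := by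
    intro a b ha hb hab
    have h1 := claim1 a b ha
    have h2 := claim1' a b hb
    have hc : starRingEnd ℂ (B a b) ≠ 0 := by simpa using hab
    exact smul_right_injective G hc (h1.symm.trans h2)
  have hconn : ∀ a b, B a a ≠ 0 → B b b ≠ 0 → gf a = gf b := by
    intro a b ha hb
    by_cases hab : B a b = 0
    · have hba : B b a = 0 := by rw [hBherm, hab, map_zero]
      have hss : B (a + b) (a + b) ≠ 0 := by
        rw [hBadd, hBadd₁, hBadd₁, hab, hba, add_zero]
        obtain ⟨ra, hra0, hra⟩ := hBpos a
        obtain ⟨rb, hrb0, hrb⟩ := hBpos b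
        rw [hra, hrb]
        have hrane : ra ≠ 0 := fun h => ha (by rw [hra, h]; norm_num)
        have hrbne : rb ≠ 0 := fun h => hb (by rw [hrb, h]; norm_num)
        simp only [zero_add]
        intro h
        have h' : ((ra + rb : ℝ) : ℂ) = 0 := by push_cast; push_cast at h; linear_combination h
        have : ra + rb = 0 := by exact_mod_cast h'
        have : ra = 0 := by
          nlinarith [lt_of_le_of_ne hra0 (Ne.symm hrane), lt_of_le_of_ne hrb0 (Ne.symm hrbne)]
        exact hrane this
      have h1 : B a (a + b) ≠ 0 := by rw [hBadd, hab, add_zero]; exact ha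
      have h2 : B (a + b) b ≠ 0 := by rw [hBadd₁, hab, zero_add]; exact hb
      exact (hpair a (a+b) ha hss h1).trans (hpair (a+b) b hss hb h2)
    · exact hpair a b ha hb hab
  by_cases hE : ∀ a, B a a = 0
  · refine ⟨0, fun a b => ?_⟩
    rw [hOP a b (hdeg a (hE a) b), smul_zero]
  · push_neg at hE
    obtain ⟨a₀, ha₀⟩ := hE
    refine ⟨gf a₀, fun a b => ?_⟩
    by_cases ha : B a a = 0
    · rw [hOP a b (hdeg a ha b), hdeg a ha b, map_zero, zero_smul]
    · rw [claim1 a b ha, hconn a a₀ ha ha₀]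


variable {H : Type*} [NormedAddCommGroup H] [InnerProductSpace ℂ H] [CompleteSpace H]

theorem KH.coe_rankOne (ξ η : H) :
    ((KH.rankOne ξ η : KH H) : H →L[ℂ] H) = rankOneOp ξ η := rfl

theorem rankOneOp_apply (ξ η h : H) : rankOneOp ξ η h = ⟪η, h⟫ • ξ := rfl

theorem star_rankOneOp (ξ η : H) : star (rankOneOp ξ η) = rankOneOp η ξ := by
  rw [ContinuousLinearMap.star_eq_adjoint]
  have h : rankOneOp η ξ = ContinuousLinearMap.adjoint (rankOneOp ξ η) := by
    rw [ContinuousLinearMap.eq_adjoint_iff]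
    intro x y
    simp only [rankOneOp_apply, inner_smul_left, inner_smul_right, inner_conj_symm]
    ring
  exact h.symm

theorem KH.star_rankOne (ξ η : H) : star (KH.rankOne ξ η) = KH.rankOne η ξ :=
  Subtype.ext (star_rankOneOp ξ η)

theorem KH.rankOne_mul_rankOne (a b c d : H) :
    KH.rankOne a b * KH.rankOne c d = ⟪b, c⟫ • KH.rankOne a d := by
  apply Subtype.ext
  show rankOneOp a b * rankOneOp c d = ⟪b, c⟫ • rankOneOp a d
  ext h
  simp [rankOneOp_apply, ContinuousLinearMap.mul_apply, inner_smul_right, smul_smul]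
  ring_nf

theorem KH.rankOne_mul_mul_rankOne (a b c d : H) (A : KH H) :
    KH.rankOne a b * A * KH.rankOne c d
      = ⟪b, (A : H →L[ℂ] H) c⟫ • KH.rankOne a d := by
  apply Subtype.ext
  show rankOneOp a b * (A : H →L[ℂ] H) * rankOneOp c d
      = ⟪b, (A : H →L[ℂ] H) c⟫ • rankOneOp a d
  ext h
  simp [rankOneOp_apply, ContinuousLinearMap.mul_apply, inner_smul_right, smul_smul]
  ring_nf

variable {W : Type*} [NormedAddCommGroup W] [NormedSpace ℂ W] [CompleteSpace W]
  (M : HilbertModule (KH H) W)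

theorem HilbertModule.inner_smul_left' (u v : W) (a : KH H) :
    M.inner (M.smul u a) v = star a * M.inner u v := by
  rw [← M.star_inner, M.inner_smul_right, star_mul, M.star_inner]

theorem HilbertModule.inner_smul_complex_left (c : ℂ) (u v : W) :
    M.inner (c • u) v = (starRingEnd ℂ) c • M.inner u v := by
  rw [← M.star_inner, M.inner_smul_complex, star_smul, M.star_inner, starRingEnd_apply]

theorem HilbertModule.smul_zero'' (u : W) : M.smul u 0 = 0 := by
  have h := M.smul_add' u 0 0
  rw [add_zero] at h
  exact add_eq_right.mp h.symm

variable {G : Type*} [NormedAddCommGroup G] [NormedSpace ℂ G]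

set_option maxHeartbeats 1000000 in
set_option synthInstance.maxHeartbeats 400000 in
theorem opr_rankOne_rep (S : W → W → G)
    (hSadd₁ : ∀ x y z : W, S (x + y) z = S x z + S y z)
    (hSadd₂ : ∀ x y z : W, S x (y + z) = S x y + S x z)
    (hSsmul₁ : ∀ (c : ℂ) (x y : W), S (c • x) y = c • S x y)
    (hSsmul₂ : ∀ (c : ℂ) (x y : W), S x (c • y) = (starRingEnd ℂ) c • S x y)
    (hSperp : ∀ x y : W, M.inner x y = 0 → S x y = 0)
    (ξ η : H) (hξ : ‖ξ‖ = 1) (hη : ‖η‖ = 1) :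
    ∃ g : G, ∀ u w : W,
      S (M.smul u (KH.rankOne ξ ξ)) (M.smul w (KH.rankOne η η)) =
        (starRingEnd ℂ) ⟪ξ, ((M.inner u w : KH H) : H →L[ℂ] H) η⟫ • g := by
  have hξ1 : (⟪ξ, ξ⟫ : ℂ) = 1 := by
    rw [inner_self_eq_norm_sq_to_K, hξ]; norm_num
  obtain ⟨g, hg⟩ := sesq_rep_aux
    (fun u v : W => ⟪ξ, ((M.inner u v : KH H) : H →L[ℂ] H) ξ⟫)
    (fun u v : W => S (M.smul u (KH.rankOne ξ ξ)) (M.smul v (KH.rankOne ξ η)))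
    (by intro a b c
        simp [M.inner_add_right, NonUnitalStarSubalgebra.coe_add, ContinuousLinearMap.add_apply,
          inner_add_right])
    (by intro μ a b
        simp [M.inner_smul_complex, NonUnitalStarSubalgebra.coe_smul, ContinuousLinearMap.smul_apply,
          inner_smul_right])
    (by intro a b
        show ⟪ξ, ((M.inner b a : KH H) : H →L[ℂ] H) ξ⟫ = _
        rw [← M.star_inner a b]
        rw [StarMemClass.coe_star, ContinuousLinearMap.star_eq_adjoint,
          ContinuousLinearMap.adjoint_inner_right]
        exact (inner_conj_symm _ _).symm)
    (by intro a
        obtain ⟨c, hc⟩ := M.inner_self_nonneg a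
        refine ⟨‖(c : H →L[ℂ] H) ξ‖ ^ 2, sq_nonneg _, ?_⟩
        show ⟪ξ, ((M.inner a a : KH H) : H →L[ℂ] H) ξ⟫ = _
        rw [hc]
        rw [NonUnitalStarSubalgebra.coe_mul, StarMemClass.coe_star,
          ContinuousLinearMap.mul_apply, ContinuousLinearMap.star_eq_adjoint,
          ContinuousLinearMap.adjoint_inner_right, inner_self_eq_norm_sq_to_K]
        norm_num)
    (by intro a b c
        show S _ (M.smul (b + c) _) = _
        rw [M.add_smul', hSadd₂])
    (by intro μ a b
        show S _ (M.smul (μ • b) _) = _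
        rw [M.smul_complex₁, hSsmul₂])
    (by intro a b c
        show S (M.smul (a + b) _) _ = _
        rw [M.add_smul', hSadd₁])
    (by intro μ a b
        show S (M.smul (μ • a) _) _ = _
        rw [M.smul_complex₁, hSsmul₁])
    (by intro a b hB
        apply hSperp
        have hB' : ⟪ξ, ((M.inner a b : KH H) : H →L[ℂ] H) ξ⟫ = (0 : ℂ) := hB
        rw [M.inner_smul_right, M.inner_smul_left' a b, KH.star_rankOne,
          KH.rankOne_mul_mul_rankOne, hB', zero_smul])
  refine ⟨g, fun u w => ?_⟩
  have key : M.smul w (KH.rankOne η η)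
      = M.smul (M.smul w (KH.rankOne η ξ)) (KH.rankOne ξ η) := by
    rw [M.smul_assoc', KH.rankOne_mul_rankOne, hξ1, one_smul]
  rw [key, hg u (M.smul w (KH.rankOne η ξ))]
  have hcoe : ((M.inner u w * KH.rankOne η ξ : KH H) : H →L[ℂ] H) ξ
      = ((M.inner u w : KH H) : H →L[ℂ] H) η := by
    rw [NonUnitalStarSubalgebra.coe_mul, ContinuousLinearMap.mul_apply, KH.coe_rankOne,
      rankOneOp_apply, hξ1, one_smul]
  rw [M.inner_smul_right, hcoe]

theorem KH.norm_coe (x : KH H) : ‖(x : H →L[ℂ] H)‖ = ‖x‖ := rfl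

theorem HilbertModule.inner_sub_right (x u v : W) :
    M.inner x (u - v) = M.inner x u - M.inner x v := by
  have h : u - v = u + (-1 : ℂ) • v := by rw [neg_one_smul, ← sub_eq_add_neg]
  rw [h, M.inner_add_right, M.inner_smul_complex, neg_one_smul, ← sub_eq_add_neg]

theorem HilbertModule.inner_sub_left (x u v : W) :
    M.inner (u - v) x = M.inner u x - M.inner v x := by
  rw [← M.star_inner, M.inner_sub_right, star_sub, M.star_inner, M.star_inner]

set_option maxHeartbeats 1000000 in
set_option synthInstance.maxHeartbeats 400000 in
theorem opr_approx {ι : Type*} (t : Finset ι) (z : ι → W) {ε : ℝ} (hε : 0 < ε) :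
    ∃ (n : ℕ) (ξ : Fin n → H), Orthonormal ℂ ξ ∧
      ∀ k ∈ t, ‖z k - M.smul (z k) (∑ i, KH.rankOne (ξ i) (ξ i))‖ ≤ ε := by
  classical
  have hδ : 0 < ε ^ 2 := by positivity
  have hnet : ∀ k : ι, ∃ C : Set H, C.Finite ∧
      (⇑((M.inner (z k) (z k) : KH H) : H →L[ℂ] H)) '' Metric.closedBall 0 1 ⊆
        ⋃ y ∈ C, Metric.ball y (ε ^ 2) := by
    intro k
    have hcpt : IsCompactOperator ⇑((M.inner (z k) (z k) : KH H) : H →L[ℂ] H) :=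
      (M.inner (z k) (z k)).2
    have htb : TotallyBounded
        ((⇑((M.inner (z k) (z k) : KH H) : H →L[ℂ] H)) '' Metric.closedBall 0 1) := by
      have h1 := (isCompactOperator_iff_isCompact_closure_image_closedBall
        (((M.inner (z k) (z k) : KH H) : H →L[ℂ] H) : H →ₗ[ℂ] H) zero_lt_one).mp hcpt
      exact h1.totallyBounded.subset subset_closure
    exact (Metric.totallyBounded_iff.mp htb (ε ^ 2) hδ).imp (fun C hC => ⟨hC.1, hC.2⟩)
  choose C hCfin hCsub using hnet
  set T : Set H := ⋃ k ∈ (t : Set ι), C k with hT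
  have hTfin : T.Finite := Set.Finite.biUnion t.finite_toSet (fun k _ => hCfin k)
  set V : Submodule ℂ H := Submodule.span ℂ T with hV
  have hfd : FiniteDimensional ℂ V := FiniteDimensional.span_of_finite ℂ hTfin
  set b := stdOrthonormalBasis ℂ V with hb
  set ξ : Fin (Module.finrank ℂ V) → H := fun i => ((b i : V) : H) with hxi
  have honb : Orthonormal ℂ ξ := by
    constructor
    · intro i
      have := b.orthonormal.1 i
      rwa [Submodule.coe_norm] at this
    · intro i j hij
      have h0 : (inner ℂ (b i) (b j) : ℂ) = 0 := b.orthonormal.2 hij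
      rw [Submodule.coe_inner] at h0
      exact h0
  refine ⟨_, ξ, honb, ?_⟩
  intro k hk
  set A := M.inner (z k) (z k) with hA
  set P : KH H := ∑ i, KH.rankOne (ξ i) (ξ i) with hP
  set Ac : H →L[ℂ] H := (A : H →L[ℂ] H) with hAc
  set Pc : H →L[ℂ] H := (P : H →L[ℂ] H) with hPc
  have hPcsum : Pc = ∑ i, rankOneOp (ξ i) (ξ i) := by
    rw [hPc, hP]
    exact AddSubmonoidClass.coe_finset_sum _ _
  have hPcapply : ∀ h : H, Pc h = ∑ i, (⟪ξ i, h⟫ : ℂ) • ξ i := by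
    intro h
    rw [hPcsum, ContinuousLinearMap.sum_apply]
    exact Finset.sum_congr rfl fun i _ => rfl
  -- P is the identity on V
  have hPV : ∀ v, v ∈ V → Pc v = v := by
    intro v hv
    have hsum := b.sum_repr ⟨v, hv⟩
    have hrepr : ∀ i, b.repr ⟨v, hv⟩ i = ⟪ξ i, v⟫ := by
      intro i
      rw [b.repr_apply_apply, Submodule.coe_inner]
    calc Pc v = ∑ i, (⟪ξ i, v⟫ : ℂ) • ξ i := hPcapply v
    _ = ((∑ i, b.repr ⟨v, hv⟩ i • b i : V) : H) := by
        rw [AddSubmonoidClass.coe_finset_sum]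
        exact Finset.sum_congr rfl fun i _ => by rw [hrepr, SetLike.val_smul]
    _ = v := by rw [hsum]
  -- 1 - P is a contraction
  have hcontr : ∀ h : H, ‖h - Pc h‖ ≤ ‖h‖ := by
    intro h
    have horth : (⟪Pc h, h - Pc h⟫ : ℂ) = 0 := by
      rw [inner_sub_right, sub_eq_zero, hPcapply h, sum_inner, sum_inner]
      refine Finset.sum_congr rfl fun i _ => ?_
      rw [inner_smul_left, inner_smul_left]
      congr 1
      rw [inner_sum, Finset.sum_eq_single i]
      · rw [inner_smul_right, orthonormal_iff_ite.mp honb]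
        simp
      · intro j _ hj
        rw [inner_smul_right, orthonormal_iff_ite.mp honb]
        simp [Ne.symm hj]
      · intro hi; exact absurd (Finset.mem_univ i) hi
    have hpyth := norm_add_sq (𝕜 := ℂ) (Pc h) (h - Pc h)
    rw [add_sub_cancel] at hpyth
    have hre : RCLike.re (⟪Pc h, h - Pc h⟫ : ℂ) = 0 := by rw [horth]; simp
    rw [hre] at hpyth
    nlinarith [norm_nonneg (Pc h), norm_nonneg (h - Pc h), norm_nonneg h]
  -- the compression estimate on the unit ball
  have hQ1 : ∀ h : H, ‖h‖ ≤ 1 → ‖Ac h - Pc (Ac h)‖ ≤ ε ^ 2 := by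
    intro h hh
    have hmem : Ac h ∈ (⇑((M.inner (z k) (z k) : KH H) : H →L[ℂ] H)) '' Metric.closedBall 0 1 :=
      ⟨h, by simpa using hh, rfl⟩
    obtain ⟨yc, hyc, hby⟩ := Set.mem_iUnion₂.mp (hCsub k hmem)
    rw [Metric.mem_ball] at hby
    have hycV : yc ∈ V := Submodule.subset_span (Set.mem_biUnion hk hyc)
    have hrw : Ac h - Pc (Ac h) = (Ac h - yc) - Pc (Ac h - yc) := by
      rw [map_sub, hPV yc hycV]
      abel
    rw [hrw]
    refine (hcontr _).trans ?_
    rw [← dist_eq_norm]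
    exact le_of_lt hby
  have hQ : ∀ h : H, ‖Ac h - Pc (Ac h)‖ ≤ ε ^ 2 * ‖h‖ := by
    intro h
    rcases eq_or_ne h 0 with rfl | hne
    · simp
    · have hpos : (0:ℝ) < ‖h‖ := norm_pos_iff.mpr hne
      have h1 : ‖(((‖h‖ : ℝ) : ℂ))⁻¹ • h‖ ≤ 1 := by
        rw [norm_smul, norm_inv, Complex.norm_real, Real.norm_eq_abs, abs_of_pos hpos,
          inv_mul_cancel₀ (ne_of_gt hpos)]
      have h2 := hQ1 _ h1
      rw [map_smul, map_smul, ← smul_sub, norm_smul, norm_inv, Complex.norm_real,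
        Real.norm_eq_abs, abs_of_pos hpos] at h2
      calc ‖Ac h - Pc (Ac h)‖ = ‖h‖ * (‖h‖⁻¹ * ‖Ac h - Pc (Ac h)‖) := by
            field_simp
      _ ≤ ‖h‖ * ε ^ 2 := mul_le_mul_of_nonneg_left h2 (le_of_lt hpos)
      _ = ε ^ 2 * ‖h‖ := mul_comm _ _
  -- operator norm estimate for the full compression
  have hEnorm : ‖A - A * P - P * A + P * A * P‖ ≤ ε ^ 2 := by
    rw [← KH.norm_coe]
    have hcoe : ((A - A * P - P * A + P * A * P : KH H) : H →L[ℂ] H)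
        = Ac - Ac * Pc - Pc * Ac + Pc * Ac * Pc := rfl
    rw [hcoe]
    set X : H →L[ℂ] H := Ac - Pc * Ac with hX
    have hXnorm : ‖X‖ ≤ ε ^ 2 := by
      refine ContinuousLinearMap.opNorm_le_bound _ (le_of_lt hδ) ?_
      intro h
      have : X h = Ac h - Pc (Ac h) := by
        rw [hX]; rfl
      rw [this]
      exact hQ h
    have hEX : Ac - Ac * Pc - Pc * Ac + Pc * Ac * Pc = X - X * Pc := by
      rw [hX]
      noncomm_ring
    rw [hEX]
    refine ContinuousLinearMap.opNorm_le_bound _ (le_of_lt hδ) ?_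
    intro h
    have h1 : (X - X * Pc) h = X (h - Pc h) := by
      simp [map_sub]
    rw [h1]
    calc ‖X (h - Pc h)‖ ≤ ‖X‖ * ‖h - Pc h‖ := ContinuousLinearMap.le_opNorm _ _
    _ ≤ ε ^ 2 * ‖h‖ :=
        mul_le_mul hXnorm (hcontr h) (norm_nonneg _) (le_of_lt hδ)
  -- module-level expansion
  have hPstar : star P = P := by
    rw [hP, star_sum]
    exact Finset.sum_congr rfl fun i _ => KH.star_rankOne _ _
  have h1 : M.inner (z k) (M.smul (z k) P) = A * P := M.inner_smul_right _ _ _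
  have h2 : M.inner (M.smul (z k) P) (z k) = P * A := by
    rw [M.inner_smul_left', hPstar, ← hA]
  have h3 : M.inner (M.smul (z k) P) (M.smul (z k) P) = P * A * P := by
    rw [M.inner_smul_right, h2]
  have hinner : M.inner (z k - M.smul (z k) P) (z k - M.smul (z k) P)
      = A - A * P - P * A + P * A * P := by
    rw [M.inner_sub_left, M.inner_sub_right, M.inner_sub_right, h1, h2, h3, ← hA]
    abel
  have hnorm2 : ‖z k - M.smul (z k) P‖ ^ 2 ≤ ε ^ 2 := by
    rw [M.norm_sq_eq, hinner]
    exact hEnorm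
  nlinarith [norm_nonneg (z k - M.smul (z k) P)]

set_option maxHeartbeats 2000000 in
set_option synthInstance.maxHeartbeats 400000 in
theorem opr_wd (S : W → W → G)
    (hScont : Continuous (fun p : W × W => S p.1 p.2))
    (hSadd₁ : ∀ x y z : W, S (x + y) z = S x z + S y z)
    (hSadd₂ : ∀ x y z : W, S x (y + z) = S x y + S x z)
    (hSsmul₁ : ∀ (c : ℂ) (x y : W), S (c • x) y = c • S x y)
    (hSsmul₂ : ∀ (c : ℂ) (x y : W), S x (c • y) = (starRingEnd ℂ) c • S x y)
    (hSperp : ∀ x y : W, M.inner x y = 0 → S x y = 0)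
    {ι : Type*} (t : Finset ι) (c : ι → ℂ) (x y : ι → W)
    (hrel : ∑ k ∈ t, c k • M.inner (y k) (x k) = 0) :
    ∑ k ∈ t, c k • S (x k) (y k) = 0 := by
  classical
  have hS0₁ : ∀ b : W, S 0 b = 0 := by
    intro b
    have h := hSadd₁ 0 0 b
    rw [add_zero] at h
    exact (add_eq_right.mp h.symm)
  have hS0₂ : ∀ a : W, S a 0 = 0 := by
    intro a
    have h := hSadd₂ a 0 0
    rw [add_zero] at h
    exact (add_eq_right.mp h.symm)
  have hSsum₁ : ∀ {α : Type} (s : Finset α) (f : α → W) (b : W),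
      S (∑ a ∈ s, f a) b = ∑ a ∈ s, S (f a) b := by
    intro α s f b
    induction s using Finset.cons_induction with
    | empty => simpa using hS0₁ b
    | cons a s ha ih => rw [Finset.sum_cons, Finset.sum_cons, hSadd₁, ih]
  have hSsum₂ : ∀ {α : Type} (s : Finset α) (a : W) (f : α → W),
      S a (∑ j ∈ s, f j) = ∑ j ∈ s, S a (f j) := by
    intro α s a f
    induction s using Finset.cons_induction with
    | empty => simpa using hS0₂ a
    | cons j s hj ih => rw [Finset.sum_cons, Finset.sum_cons, hSadd₂, ih]
  have hsmulsum : ∀ (w : W) {α : Type} (s : Finset α) (f : α → KH H),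
      M.smul w (∑ a ∈ s, f a) = ∑ a ∈ s, M.smul w (f a) := by
    intro w α s f
    induction s using Finset.cons_induction with
    | empty => simpa using M.smul_zero'' w
    | cons a s ha ih => rw [Finset.sum_cons, Finset.sum_cons, M.smul_add', ih]
  -- the approximated identity
  have hseq : ∀ n : ℕ, ∃ u v : ι → W,
      (∀ k ∈ t, ‖x k - u k‖ ≤ ((n : ℝ) + 1)⁻¹ ∧ ‖y k - v k‖ ≤ ((n : ℝ) + 1)⁻¹) ∧
      (∑ k ∈ t, c k • S (u k) (v k)) = 0 := by
    intro n
    have hεn : (0:ℝ) < ((n : ℝ) + 1)⁻¹ := by positivity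
    obtain ⟨m, ξ, honb, happ⟩ := opr_approx M t x hεn
    obtain ⟨m', η, honb', happ'⟩ := opr_approx M t y hεn
    set P : KH H := ∑ i, KH.rankOne (ξ i) (ξ i) with hP
    set Q : KH H := ∑ j, KH.rankOne (η j) (η j) with hQ
    refine ⟨fun k => M.smul (x k) P, fun k => M.smul (y k) Q,
      fun k hk => ⟨happ k hk, happ' k hk⟩, ?_⟩
    have hexp : ∀ k, S (M.smul (x k) P) (M.smul (y k) Q)
        = ∑ i, ∑ j, S (M.smul (x k) (KH.rankOne (ξ i) (ξ i)))
            (M.smul (y k) (KH.rankOne (η j) (η j))) := by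
      intro k
      rw [hP, hQ, hsmulsum, hsmulsum, hSsum₁]
      exact Finset.sum_congr rfl fun i _ => hSsum₂ _ _ _
    calc ∑ k ∈ t, c k • S (M.smul (x k) P) (M.smul (y k) Q)
        = ∑ k ∈ t, ∑ i, ∑ j, c k • S (M.smul (x k) (KH.rankOne (ξ i) (ξ i)))
            (M.smul (y k) (KH.rankOne (η j) (η j))) := by
          refine Finset.sum_congr rfl fun k _ => ?_
          rw [hexp k, Finset.smul_sum]
          exact Finset.sum_congr rfl fun i _ => Finset.smul_sum
    _ = ∑ i, ∑ j, ∑ k ∈ t, c k • S (M.smul (x k) (KH.rankOne (ξ i) (ξ i)))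
            (M.smul (y k) (KH.rankOne (η j) (η j))) := by
          rw [Finset.sum_comm]
          exact Finset.sum_congr rfl fun i _ => Finset.sum_comm
    _ = 0 := by
          refine Finset.sum_eq_zero fun i _ => Finset.sum_eq_zero fun j _ => ?_
          obtain ⟨g, hg⟩ := opr_rankOne_rep M S hSadd₁ hSadd₂ hSsmul₁ hSsmul₂ hSperp
            (ξ i) (η j) (honb.1 i) (honb'.1 j)
          have hterm : ∀ k, c k • S (M.smul (x k) (KH.rankOne (ξ i) (ξ i)))
              (M.smul (y k) (KH.rankOne (η j) (η j)))
              = (c k * (⟪η j, ((M.inner (y k) (x k) : KH H) : H →L[ℂ] H) (ξ i)⟫ : ℂ)) • g := by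
            intro k
            have hconj : (⟪η j, ((M.inner (y k) (x k) : KH H) : H →L[ℂ] H) (ξ i)⟫ : ℂ)
                = (starRingEnd ℂ)
                    ⟪ξ i, ((M.inner (x k) (y k) : KH H) : H →L[ℂ] H) (η j)⟫ := by
              rw [← M.star_inner (x k) (y k), StarMemClass.coe_star,
                ContinuousLinearMap.star_eq_adjoint, ContinuousLinearMap.adjoint_inner_right]
              exact (inner_conj_symm _ _).symm
            rw [hg (x k) (y k), smul_smul, hconj]
          rw [Finset.sum_congr rfl fun k _ => hterm k, ← Finset.sum_smul]
          have hsum : ∑ k ∈ t, c k * (⟪η j, ((M.inner (y k) (x k) : KH H) : H →L[ℂ] H) (ξ i)⟫ : ℂ)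
              = ⟪η j, ((∑ k ∈ t, c k • M.inner (y k) (x k) : KH H) : H →L[ℂ] H) (ξ i)⟫ := by
            rw [AddSubmonoidClass.coe_finset_sum, ContinuousLinearMap.sum_apply, inner_sum]
            refine Finset.sum_congr rfl fun k _ => ?_
            rw [NonUnitalStarSubalgebra.coe_smul, ContinuousLinearMap.smul_apply,
              inner_smul_right]
          rw [hsum, hrel]
          simp
  choose u v huv hzero using hseq
  have hlim : Filter.Tendsto (fun n => ∑ k ∈ t, c k • S (u n k) (v n k))
      Filter.atTop (nhds (∑ k ∈ t, c k • S (x k) (y k))) := by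
    refine tendsto_finset_sum _ fun k hk => ?_
    refine Filter.Tendsto.const_smul ?_ (c k)
    have hu : Filter.Tendsto (fun n => u n k) Filter.atTop (nhds (x k)) := by
      rw [tendsto_iff_dist_tendsto_zero]
      refine squeeze_zero (f := fun n : ℕ => dist (u n k) (x k))
        (g := fun n : ℕ => ((n : ℝ) + 1)⁻¹) (fun n => dist_nonneg)
        (fun n => ?_) ?_
      · show dist (u n k) (x k) ≤ ((n : ℝ) + 1)⁻¹
        rw [dist_eq_norm, ← norm_neg, neg_sub]
        exact (huv n k hk).1
      · exact tendsto_one_div_add_atTop_nhds_zero_nat.congr fun n => by rw [one_div]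
    have hv : Filter.Tendsto (fun n => v n k) Filter.atTop (nhds (y k)) := by
      rw [tendsto_iff_dist_tendsto_zero]
      refine squeeze_zero (f := fun n : ℕ => dist (v n k) (y k))
        (g := fun n : ℕ => ((n : ℝ) + 1)⁻¹) (fun n => dist_nonneg)
        (fun n => ?_) ?_
      · show dist (v n k) (y k) ≤ ((n : ℝ) + 1)⁻¹
        rw [dist_eq_norm, ← norm_neg, neg_sub]
        exact (huv n k hk).2
      · exact tendsto_one_div_add_atTop_nhds_zero_nat.congr fun n => by rw [one_div]
    exact (hScont.tendsto (x k, y k)).comp (hu.prodMk_nhds hv)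
  rw [show (fun n => ∑ k ∈ t, c k • S (u n k) (v n k)) = (fun _ => (0 : G)) from
    funext hzero] at hlim
  exact tendsto_nhds_unique hlim tendsto_const_nhds

end AuxOPR




set_option maxHeartbeats 4000000 in
set_option synthInstance.maxHeartbeats 1000000 in
/-- Proposition 4.3, first part.
Let `W` be a Hilbert C*-module over `K(H)` and `G` a complex normed space.  If
`S : W × W → G` is a continuous sesquilinear orthogonality preserving mapping, then there
is a unique linear `Φ : ⟨W,W⟩ → G` (on the linear span of all inner products) such that
`S(x,y) = Φ(⟨y,x⟩)` for all `x, y ∈ W`. -/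
theorem sesquilinear_orthogonality_preserving_representation
    {H : Type*} [NormedAddCommGroup H] [InnerProductSpace ℂ H] [CompleteSpace H]
    {W : Type*} [NormedAddCommGroup W] [NormedSpace ℂ W] [CompleteSpace W]
    (M : HilbertModule (KH H) W)
    {G : Type*} [NormedAddCommGroup G] [NormedSpace ℂ G]
    (S : W → W → G)
    (hScont : Continuous (fun p : W × W => S p.1 p.2))
    (hSadd₁ : ∀ x y z : W, S (x + y) z = S x z + S y z)
    (hSadd₂ : ∀ x y z : W, S x (y + z) = S x y + S x z)
    (hSsmul₁ : ∀ (c : ℂ) (x y : W), S (c • x) y = c • S x y)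
    (hSsmul₂ : ∀ (c : ℂ) (x y : W), S x (c • y) = (starRingEnd ℂ) c • S x y)
    (hSperp : ∀ x y : W, M.inner x y = 0 → S x y = 0) :
    ∃! Φ : ↥(Submodule.span ℂ {a : KH H | ∃ x y : W, M.inner x y = a}) →ₗ[ℂ] G,
      ∀ x y : W, S x y = Φ ⟨M.inner y x, Submodule.subset_span ⟨y, x, rfl⟩⟩ := by
  classical
  set gen : Set (KH H) := {a : KH H | ∃ x y : W, M.inner x y = a} with hgen
  have hmem : ∀ v : gen, ∃ x y : W, M.inner x y = (v : KH H) := fun v => v.2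
  choose xf yf hxyf using hmem
  set T : gen → G := fun v => S (yf v) (xf v) with hT
  set ψ : (gen →₀ ℂ) →ₗ[ℂ] G := Finsupp.linearCombination ℂ T with hψ
  set π₀ : (gen →₀ ℂ) →ₗ[ℂ] KH H :=
    Finsupp.linearCombination ℂ (fun v : gen => (v : KH H)) with hπ₀
  have hrange : LinearMap.range π₀ = Submodule.span ℂ gen := by
    rw [hπ₀, Finsupp.range_linearCombination, Subtype.range_coe]
  have hmem' : ∀ f, π₀ f ∈ Submodule.span ℂ gen := fun f => by
    rw [← hrange]; exact ⟨f, rfl⟩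
  set π : (gen →₀ ℂ) →ₗ[ℂ] ↥(Submodule.span ℂ gen) := π₀.codRestrict _ hmem' with hπ
  have hsurj : Function.Surjective π := by
    rintro ⟨b, hb⟩
    rw [← hrange] at hb
    obtain ⟨f, hf⟩ := hb
    exact ⟨f, Subtype.ext hf⟩
  have hwd : ∀ f : gen →₀ ℂ, π₀ f = 0 → ψ f = 0 := by
    intro f hf
    have h0 : π₀ f = ∑ vv ∈ f.support, f vv • (vv : KH H) := by
      rw [hπ₀, Finsupp.linearCombination_apply, Finsupp.sum]
    have h1 : ∑ vv ∈ f.support, f vv • M.inner (xf vv) (yf vv) = 0 := by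
      calc ∑ vv ∈ f.support, f vv • M.inner (xf vv) (yf vv)
          = ∑ vv ∈ f.support, f vv • (vv : KH H) :=
            Finset.sum_congr rfl fun vv _ => by rw [hxyf vv]
      _ = π₀ f := h0.symm
      _ = 0 := hf
    have h2 := opr_wd M S hScont hSadd₁ hSadd₂ hSsmul₁ hSsmul₂ hSperp
      f.support f (fun v => yf v) (fun v => xf v) h1
    rw [hψ, Finsupp.linearCombination_apply, Finsupp.sum]
    exact h2
  have hker : LinearMap.ker π ≤ LinearMap.ker ψ := by
    intro f hf
    rw [LinearMap.mem_ker] at hf ⊢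
    exact hwd f (congrArg Subtype.val hf)
  set e := LinearMap.quotKerEquivOfSurjective (R := ℂ) (M := gen →₀ ℂ) (M₂ := ↥(Submodule.span ℂ gen)) π hsurj with he
  set Φ : ↥(Submodule.span ℂ gen) →ₗ[ℂ] G :=
    ((LinearMap.ker π).liftQ ψ hker).comp e.symm.toLinearMap with hΦ
  have hΦπ : ∀ f, Φ (π f) = ψ f := by
    intro f
    have h1 : e (Submodule.Quotient.mk f) = π f := rfl
    have h2 : e.symm (π f) = Submodule.Quotient.mk f := by
      rw [← h1, LinearEquiv.symm_apply_apply]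
    rw [hΦ, LinearMap.comp_apply, LinearEquiv.coe_toLinearMap, h2, Submodule.liftQ_apply]
  have hprop : ∀ x y : W, S x y = Φ ⟨M.inner y x, Submodule.subset_span ⟨y, x, rfl⟩⟩ := by
    intro x0 y0
    set v0 : gen := ⟨M.inner y0 x0, ⟨y0, x0, rfl⟩⟩ with hv0
    have hπs : π (Finsupp.single v0 1)
        = ⟨M.inner y0 x0, Submodule.subset_span ⟨y0, x0, rfl⟩⟩ := by
      apply Subtype.ext
      show π₀ (Finsupp.single v0 1) = M.inner y0 x0
      rw [hπ₀, Finsupp.linearCombination_single, one_smul]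
    rw [← hπs, hΦπ, hψ, Finsupp.linearCombination_single, one_smul, hT]
    have hrel2 : M.inner (xf v0) (yf v0) = M.inner y0 x0 := hxyf v0
    have h2 := opr_wd M S hScont hSadd₁ hSadd₂ hSsmul₁ hSsmul₂ hSperp
      (Finset.univ : Finset (Fin 2)) ![1, -1] ![yf v0, x0] ![xf v0, y0] ?_
    · have h2' : S (yf v0) (xf v0) + -S x0 y0 = 0 := by
        simpa [Fin.sum_univ_two] using h2
      exact (add_neg_eq_zero.mp h2').symm
    · simp [Fin.sum_univ_two, hrel2]
  refine ⟨Φ, hprop, ?_⟩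
  intro Ψ hΨ
  have hcomp : ∀ (Θ : ↥(Submodule.span ℂ gen) →ₗ[ℂ] G),
      (∀ x y : W, S x y = Θ ⟨M.inner y x, Submodule.subset_span ⟨y, x, rfl⟩⟩) →
      Θ.comp π = ψ := by
    intro Θ hΘ
    apply Finsupp.lhom_ext
    intro v cc
    have hπs : π (Finsupp.single v cc)
        = cc • ⟨(v : KH H), Submodule.subset_span v.2⟩ := by
      apply Subtype.ext
      show π₀ (Finsupp.single v cc) = _
      rw [hπ₀, Finsupp.linearCombination_single]
      rfl
    rw [LinearMap.comp_apply, hπs, map_smul]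
    have hv : (⟨(v : KH H), Submodule.subset_span v.2⟩ : ↥(Submodule.span ℂ gen))
        = ⟨M.inner (xf v) (yf v), Submodule.subset_span ⟨xf v, yf v, rfl⟩⟩ :=
      Subtype.ext (hxyf v).symm
    rw [hv, ← hΘ (yf v) (xf v), hψ, Finsupp.linearCombination_single, hT]
  have h1 := hcomp Ψ hΨ
  have h2 := hcomp Φ hprop
  exact (LinearMap.cancel_right hsurj).mp (h1.trans h2.symm)
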